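/- Let M ∈ ℤ⁺ and let β_1, β_2, …, β_R ∈ K_∞ satisfy ord {β_j} ≥ −M for all 1 ≤ j ≤ R. Then there exists a nonzero x ∈ G_M such that |Σ_{j=1}^R e(x β_j)| ≥ R/(q^M − 1). -/

import Mathlib

open Polynomial Classical

/-- Embedding of `F[t]` into `K_∞ = F((1/t))`, realized as Laurent series in `X = 1/t`
(so `t ↦ X⁻¹`, i.e. the single Hahn series with exponent `-1`). -/
noncomputable def tEmbed (F : Type*) [Field F] : Polynomial F →+* LaurentSeries F :=
  (Polynomial.aeval (HahnSeries.single (-1 : ℤ) (1 : F))).toRingHom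

/-- `ord` of an element of `K_∞` (in terms of `t`): the largest `t`-exponent, `⊥` if zero. -/
noncomputable def ordinf {F : Type*} [Field F] (α : LaurentSeries F) : EReal :=
  if α = 0 then ⊥ else (((-α.order : ℤ) : ℝ) : EReal)

/-- Fractional part `{α}`: the part with negative `t`-exponents (positive `X`-exponents). -/
noncomputable def fracPart {F : Type*} [Field F] (α : LaurentSeries F) : LaurentSeries F :=
  { coeff := fun i => if 1 ≤ i then α.coeff i else 0,
    isPWO_support' := α.isPWO_support'.mono (fun i hi => by
      by_cases h : (1:ℤ) ≤ i <;> simp only [Function.mem_support, h, if_true, if_false] at hi ⊢ <;>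
        first | exact hi | exact absurd rfl hi) }

/-- `res α`: the coefficient of `t⁻¹` in `α`. -/
noncomputable def res {F : Type*} [Field F] (α : LaurentSeries F) : F := α.coeff 1

/-- A polynomial is supported on `K ⊆ ℤ⁺` if its nonconstant coefficients are nonzero
exactly at the exponents in `K`. -/
def SupportedOn {R : Type*} [Semiring R] (h : Polynomial R) (K : Set ℕ) : Prop :=
  (∀ k ∈ K, 0 < k) ∧ ∀ r : ℕ, 0 < r → (h.coeff r ≠ 0 ↔ r ∈ K)

/-- The shadow `S(K)` of `K ⊆ ℤ⁺`: positive integers `j` with `j ≼_p r` for some `r ∈ K`. -/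
def Shadow (p : ℕ) (K : Set ℕ) : Set ℕ :=
  {j | 0 < j ∧ ∃ r ∈ K, ¬ p ∣ Nat.choose r j}

/-- `K* = {k ∈ K : p ∤ k and pᵛk ∉ S(K) for all v ≥ 1}`. -/
def Kstar (p : ℕ) (K : Set ℕ) : Set ℕ :=
  {k | k ∈ K ∧ ¬ p ∣ k ∧ ∀ v : ℕ, 0 < v → p ^ v * k ∉ Shadow p K}

/-- `k` is maximal in `K` with respect to the partial order `≼_p`. -/
def MaximalIn (p : ℕ) (K : Set ℕ) (k : ℕ) : Prop :=
  k ∈ K ∧ ∀ r ∈ K, ¬ p ∣ Nat.choose r k → r = k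

/-- The part of a polynomial consisting of the monomials with exponents in `S`. -/
noncomputable def portion {R : Type*} [Semiring R] (h : Polynomial R) (S : Set ℕ) :
    Polynomial R :=
  ∑ r ∈ h.support, if r ∈ S then Polynomial.C (h.coeff r) * Polynomial.X ^ r else 0

/-- The polynomial of degree `< N` with coefficient vector `c`. -/
noncomputable def polyOf {F : Type*} [Semiring F] (N : ℕ) (c : Fin N → F) : Polynomial F :=
  ∑ i : Fin N, Polynomial.C (c i) * Polynomial.X ^ (i : ℕ)

/-- `ord` of a polynomial in `F[t]`, i.e. its degree, with `⊥` for `0`. -/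
noncomputable def pOrd {F : Type*} [Field F] (x : Polynomial F) : EReal :=
  if x = 0 then ⊥ else ((x.natDegree : ℝ) : EReal)

lemma amap {F : Type*} [Field F] (a : F) :
    (algebraMap F (LaurentSeries F)) a = HahnSeries.C a := by
  rw [HahnSeries.algebraMap_apply']
  simp [PowerSeries.algebraMap_apply, HahnSeries.ofPowerSeries_C]

lemma tEmbed_monomial {F : Type*} [Field F] (a : F) (n : ℕ) :
    tEmbed F (C a * X ^ n) = HahnSeries.single (-(n:ℤ)) a := by
  show Polynomial.aeval _ _ = _
  rw [map_mul, map_pow, aeval_X, aeval_C, HahnSeries.single_pow, amap,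
    HahnSeries.C_apply, HahnSeries.single_mul_single]
  norm_num

lemma polyOf_coeff {F : Type*} [Semiring F] (M : ℕ) (c : Fin M → F) (i : Fin M) :
    (polyOf M c).coeff i = c i := by
  unfold polyOf
  rw [Polynomial.finset_sum_coeff]
  simp only [Polynomial.coeff_C_mul, Polynomial.coeff_X_pow]
  simp only [Fin.val_eq_val, mul_ite, mul_one, mul_zero]
  rw [Finset.sum_ite_eq]
  simp

lemma polyOf_degree_lt {F : Type*} [Semiring F] (M : ℕ) (hM : 0 < M) (c : Fin M → F) :
    (polyOf M c).degree < (M : WithBot ℕ) := by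
  refine lt_of_le_of_lt (Polynomial.degree_sum_le _ _) ?_
  rw [Finset.sup_lt_iff (by exact_mod_cast WithBot.bot_lt_coe M)]
  intro i _
  exact lt_of_le_of_lt (Polynomial.degree_C_mul_X_pow_le _ _) (by exact_mod_cast i.isLt)

lemma res_linear {F : Type*} [Field F] (M : ℕ) (c : Fin M → F) (β : LaurentSeries F) :
    res (tEmbed F (polyOf M c) * β) = ∑ i : Fin M, c i * β.coeff ((i : ℤ) + 1) := by
  unfold polyOf
  rw [map_sum, Finset.sum_mul]
  show (HahnSeries.coeff.addMonoidHom (1:ℤ)) _ = _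
  rw [map_sum]
  refine Finset.sum_congr rfl fun i _ => ?_
  show (tEmbed F (C (c i) * X ^ (i:ℕ)) * β).coeff 1 = _
  rw [tEmbed_monomial]
  conv_lhs => rw [show (1:ℤ) = ((i:ℤ)+1) + -(i:ℤ) by ring]
  rw [HahnSeries.coeff_single_mul_add]

lemma addChar_map_sum {A N : Type*} [AddCommMonoid A] [CommMonoid N] (ψ : AddChar A N)
    {ι : Type*} (s : Finset ι) (f : ι → A) :
    ψ (∑ i ∈ s, f i) = ∏ i ∈ s, ψ (f i) := by
  classical
  induction s using Finset.induction with
  | empty => simp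
  | insert _ _ h ih => rw [Finset.sum_insert h, Finset.prod_insert h, AddChar.map_add_eq_mul, ih]

lemma char_sum_zero {F : Type*} [Field F] [Fintype F] (ψ : AddChar F ℂ) (hψ : ψ ≠ 1)
    (M : ℕ) (b : Fin M → F) (i₀ : Fin M) (hb : b i₀ ≠ 0) :
    ∑ c : Fin M → F, ψ (∑ i, c i * b i) = 0 := by
  classical
  have h1 : ∑ c : Fin M → F, ψ (∑ i, c i * b i)
      = ∏ i : Fin M, ∑ a : F, ψ (a * b i) := by
    rw [Finset.prod_univ_sum]
    simp only [Fintype.piFinset_univ]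
    exact Finset.sum_congr rfl fun c _ => addChar_map_sum ψ _ _
  rw [h1]
  apply Finset.prod_eq_zero (Finset.mem_univ i₀)
  have h2 : ∑ a : F, ψ (a * b i₀) = ∑ a : F, ψ a :=
    Fintype.sum_equiv (Equiv.mulRight₀ (b i₀) hb) _ _ (fun a => rfl)
  rw [h2]
  exact AddChar.sum_eq_zero_iff_ne_zero.2 hψ

lemma exists_coeff {F : Type*} [Field F] (M : ℕ) (β : LaurentSeries F)
    (h : ((-(M : ℝ) : ℝ) : EReal) ≤ ordinf (fracPart β)) :
    ∃ i₀ : Fin M, β.coeff ((i₀ : ℤ) + 1) ≠ 0 := by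
  by_cases hz : fracPart β = 0
  · rw [ordinf, if_pos hz, le_bot_iff] at h
    exact absurd h (EReal.coe_ne_bot _)
  · rw [ordinf, if_neg hz, EReal.coe_le_coe_iff] at h
    set k := (fracPart β).order with hk
    have hcoe : (fracPart β).coeff k ≠ 0 := fun h0 => hz (HahnSeries.coeff_order_eq_zero.mp h0)
    have h1 : 1 ≤ k := by
      by_contra hc
      rw [show (fracPart β).coeff k = if 1 ≤ k then β.coeff k else 0 from rfl,
        if_neg hc] at hcoe
      exact hcoe rfl
    have hβk : β.coeff k ≠ 0 := by
      rwa [show (fracPart β).coeff k = if 1 ≤ k then β.coeff k else 0 from rfl,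
        if_pos h1] at hcoe
    have hkM : k ≤ (M : ℤ) := by
      have : -(M:ℝ) ≤ -(k:ℝ) := by exact_mod_cast h
      have : (k:ℝ) ≤ (M:ℝ) := by linarith
      exact_mod_cast this
    have hi : (k - 1).toNat < M := by omega
    refine ⟨⟨(k - 1).toNat, hi⟩, ?_⟩
    have : ((((k - 1).toNat : ℕ) : ℤ) + 1) = k := by omega
    rw [show ((⟨(k-1).toNat, hi⟩ : Fin M) : ℤ) = ((k-1).toNat : ℤ) from rfl, this]
    exact hβk

/-- **Lemma (large exponential sum from bounded fractional parts).** -/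
theorem stmt7 (p q : ℕ) [Fact p.Prime] (F : Type*) [Field F] [Fintype F] [CharP F p]
    (hcard : Fintype.card F = q) (ψ : AddChar F ℂ) (hψ : ψ ≠ 1)
    (M : ℕ) (hM : 0 < M) (R : ℕ) (β : Fin R → LaurentSeries F)
    (hβ : ∀ j, ((-(M : ℝ) : ℝ) : EReal) ≤ ordinf (fracPart (β j))) :
    ∃ x : Polynomial F, x ≠ 0 ∧ x.degree < (M : WithBot ℕ) ∧
      (R : ℝ) / ((q : ℝ) ^ M - 1) ≤
        ‖∑ j, ψ (res (tEmbed F x * β j))‖ := by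
  classical
  have hq2 : 2 ≤ q := by rw [← hcard]; exact Fintype.one_lt_card
  have hqM : 1 < q ^ M := Nat.one_lt_pow hM.ne' (by omega)
  have hq1 : (1:ℝ) < (q:ℝ) ^ M := by exact_mod_cast hqM
  set G : (Fin M → F) → ℂ := fun c => ∑ j, ψ (res (tEmbed F (polyOf M c) * β j)) with hG
  have hsum : ∑ c : Fin M → F, G c = 0 := by
    rw [hG]
    rw [Finset.sum_comm]
    refine Finset.sum_eq_zero fun j _ => ?_
    obtain ⟨i₀, hi₀⟩ := exists_coeff M (β j) (hβ j)
    calc ∑ c : Fin M → F, ψ (res (tEmbed F (polyOf M c) * β j))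
        = ∑ c : Fin M → F, ψ (∑ i, c i * (β j).coeff ((i:ℤ)+1)) :=
          Finset.sum_congr rfl fun c _ => by rw [res_linear]
      _ = 0 := char_sum_zero ψ hψ M _ i₀ hi₀
  have hpoly0 : polyOf M (0 : Fin M → F) = 0 := by simp [polyOf]
  have h0 : G 0 = (R : ℂ) := by
    rw [hG]
    simp [hpoly0, res, map_zero]
  have key : ∑ c ∈ Finset.univ.erase (0 : Fin M → F), G c = -(R:ℂ) := by
    have h := Finset.add_sum_erase Finset.univ G (Finset.mem_univ (0 : Fin M → F))
    rw [hsum, h0] at h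
    linear_combination h
  have hcardE : (Finset.univ.erase (0 : Fin M → F)).card = q ^ M - 1 := by
    rw [Finset.card_erase_of_mem (Finset.mem_univ _), Finset.card_univ, Fintype.card_fun,
      hcard, Fintype.card_fin]
  by_contra hcon
  push_neg at hcon
  have hlt : ∀ c ∈ Finset.univ.erase (0:Fin M → F),
      ‖G c‖ < (R:ℝ)/((q:ℝ)^M - 1) := by
    intro c hc
    have hc0 : c ≠ 0 := Finset.ne_of_mem_erase hc
    have hx0 : polyOf M c ≠ 0 := by
      intro h
      obtain ⟨i, hi⟩ := Function.ne_iff.1 hc0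
      exact hi (by rw [← polyOf_coeff M c i, h, Polynomial.coeff_zero]; rfl)
    exact hcon (polyOf M c) hx0 (polyOf_degree_lt M hM c)
  have hne : (Finset.univ.erase (0:Fin M → F)).Nonempty := by
    rw [← Finset.card_pos, hcardE]; omega
  have habs : (R:ℝ) ≤ ∑ c ∈ Finset.univ.erase (0:Fin M → F), ‖G c‖ := by
    have := norm_sum_le (Finset.univ.erase (0:Fin M → F)) G
    rw [key] at this
    simpa using this
  have hlt2 : ∑ c ∈ Finset.univ.erase (0:Fin M → F), ‖G c‖
      < ∑ _c ∈ Finset.univ.erase (0:Fin M → F), (R:ℝ)/((q:ℝ)^M - 1) :=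
    Finset.sum_lt_sum_of_nonempty hne hlt
  rw [Finset.sum_const, hcardE, nsmul_eq_mul] at hlt2
  have hcast : ((q^M - 1 : ℕ) : ℝ) = (q:ℝ)^M - 1 := by
    push_cast [Nat.cast_sub hqM.le]
    ring
  rw [hcast] at hlt2
  have hden : (q:ℝ)^M - 1 ≠ 0 := by linarith
  rw [mul_div_cancel₀ _ hden] at hlt2
  linarith
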